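/- arXiv:2304.08060 — 2 statements merged into one kernel-verified Lean document; each statement's English description precedes it below -/
import Mathlib

section
/- For the dual chain X_{n+1} = X_n ∧ δ_{n+1} + β_{n+1} with δ shifted geometric(α), the p.g.f.'s satisfy Φ_{n+1}(z) = φ_β(z)·(α + ᾱ(1-z)Φ_n(ᾱz))/(1 - ᾱz). In particular Φ_{n+1}(0) = b₀(α + ᾱΦ_n(0)), whence P(X_n = 0) = b₀α·(1 - (b₀ᾱ)ⁿ)/(1 - b₀ᾱ) + (b₀ᾱ)ⁿ·P(X_0 = 0), which converges to b₀α/(1 - b₀ᾱ) as n → ∞. -/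
open MeasureTheory ProbabilityTheory Set Filter

section AuxInt

lemma int_of_bdd {A : Type*} [MeasurableSpace A] [Countable A] [MeasurableSingletonClass A]
    (ν : Measure A) [IsProbabilityMeasure ν] (f : A → ℝ) (hf : ∀ a, |f a| ≤ 1) :
    Integrable f ν :=
  (integrable_const (1 : ℝ)).mono' (measurable_of_countable f).aestronglyMeasurable
    (Filter.Eventually.of_forall fun a => by simpa [Real.norm_eq_abs] using hf a)

variable {Ω : Type*} [MeasurableSpace Ω] (μ : Measure Ω) [IsProbabilityMeasure μ]

lemma aux_integrable {A : Type*} [MeasurableSpace A] [Countable A] [MeasurableSingletonClass A]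
    (Y : Ω → A) (hY : Measurable Y) (f : A → ℝ) (hf : ∀ a, |f a| ≤ 1) :
    Integrable (fun ω => f (Y ω)) μ :=
  (integrable_const (1 : ℝ)).mono' ((measurable_of_countable f).comp hY).aestronglyMeasurable
    (Filter.Eventually.of_forall fun a => by simpa [Real.norm_eq_abs] using hf (Y a))

lemma aux_expect {A : Type*} [MeasurableSpace A] [Countable A] [MeasurableSingletonClass A]
    (Y : Ω → A) (hY : Measurable Y) (f : A → ℝ) (hf : ∀ a, |f a| ≤ 1) :
    ∫ ω, f (Y ω) ∂μ = ∑' a, (μ {ω | Y ω = a}).toReal * f a := by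
  have : IsProbabilityMeasure (μ.map Y) := Measure.isProbabilityMeasure_map hY.aemeasurable
  rw [← integral_map hY.aemeasurable
      ((measurable_of_countable f).stronglyMeasurable.aestronglyMeasurable),
    integral_countable' (int_of_bdd (μ.map Y) f hf)]
  refine tsum_congr fun a => ?_
  rw [measureReal_def, Measure.map_apply hY (measurableSet_singleton a), smul_eq_mul]
  congr 2

lemma aux_mass {A : Type*} [MeasurableSpace A] [Countable A] [MeasurableSingletonClass A]
    (Y : Ω → A) (hY : Measurable Y) :
    HasSum (fun a => (μ {ω | Y ω = a}).toReal) 1 := by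
  have h1 : ∑' a, μ {ω | Y ω = a} = 1 := by
    have hd : Pairwise (Function.onFun Disjoint fun a => Y ⁻¹' {a}) := by
      intro i j hij
      simp only [Function.onFun, Set.disjoint_left]
      rintro ω h1 h2
      exact hij ((show Y ω = i from h1) ▸ (show Y ω = j from h2) ▸ rfl)
    have := (measure_iUnion (μ := μ) hd fun a => hY (measurableSet_singleton a)).symm
    have hu : (⋃ a, Y ⁻¹' {a}) = Set.univ := by ext ω; simp [Set.mem_iUnion]
    rw [hu, measure_univ] at this
    exact this
  have hfin : ∀ a, μ {ω | Y ω = a} ≠ ⊤ := fun a => (measure_lt_top _ _).ne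
  have hs : Summable (fun a => (μ {ω | Y ω = a}).toReal) :=
    ENNReal.summable_toReal (by rw [h1]; exact ENNReal.one_ne_top)
  have := hs.hasSum
  rwa [← ENNReal.tsum_toReal_eq hfin, h1, ENNReal.toReal_one] at this

end AuxInt

lemma pow_abs_le_one {z : ℝ} (hz : |z| ≤ 1) (m : ℕ) : |z ^ m| ≤ 1 := by
  rw [abs_pow]; exact pow_le_one₀ (abs_nonneg z) hz

lemma geom_min (α z : ℝ) (hα0 : 0 < α) (hα1 : α < 1) (hz : |z| ≤ 1)
    (hz1 : (1 - α) * z ≠ 1) (x : ℕ) :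
    ∑' d : ℕ, α * (1 - α) ^ d * z ^ min x d
      = (α + (1 - α) * (1 - z) * ((1 - α) * z) ^ x) / (1 - (1 - α) * z) := by
  have ha0 : (0:ℝ) ≤ 1 - α := by linarith
  have ha1 : (1:ℝ) - α < 1 := by linarith
  have hgs : Summable (fun d : ℕ => α * (1 - α) ^ d) :=
    (summable_geometric_of_lt_one ha0 ha1).mul_left α
  have hf : Summable (fun d : ℕ => α * (1 - α) ^ d * z ^ min x d) := by
    apply Summable.of_abs
    refine Summable.of_nonneg_of_le (fun d => abs_nonneg _) (fun d => ?_) hgs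
    rw [abs_mul, abs_mul, abs_pow, abs_of_pos hα0, abs_of_nonneg ha0]
    have h1 : |z ^ min x d| ≤ 1 := pow_abs_le_one hz _
    have h2 : α * (1 - α) ^ d * |z ^ min x d| ≤ α * (1 - α) ^ d * 1 :=
      mul_le_mul_of_nonneg_left h1 (by positivity)
    simpa using h2
  rw [← Summable.sum_add_tsum_nat_add x hf]
  have hhead : ∑ i ∈ Finset.range x, α * (1 - α) ^ i * z ^ min x i
      = α * ((((1 - α) * z) ^ x - 1) / ((1 - α) * z - 1)) := by
    have : ∀ i ∈ Finset.range x, α * (1 - α) ^ i * z ^ min x i = α * ((1 - α) * z) ^ i := by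
      intro i hi
      rw [min_eq_right (Nat.le_of_lt (Finset.mem_range.1 hi)), mul_pow]; ring
    rw [Finset.sum_congr rfl this, ← Finset.mul_sum, geom_sum_eq hz1]
  have htail : ∑' i : ℕ, α * (1 - α) ^ (i + x) * z ^ min x (i + x)
      = ((1 - α) * z) ^ x := by
    have h : ∀ i : ℕ, α * (1 - α) ^ (i + x) * z ^ min x (i + x)
        = ((((1 - α) * z) ^ x * α) * (1 - α) ^ i) := by
      intro i
      rw [min_eq_left (Nat.le_add_left x i), pow_add, mul_pow]; ring
    rw [tsum_congr h, tsum_mul_left, tsum_geometric_of_lt_one ha0 ha1]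
    have h2 : (1:ℝ) - (1 - α) = α := by ring
    rw [h2]
    field_simp
  rw [hhead, htail]
  have h1r : 1 - (1 - α) * z ≠ 0 := fun h => hz1 (by linarith)
  have hr1 : (1 - α) * z - 1 ≠ 0 := sub_ne_zero.2 hz1
  field_simp
  ring

lemma min_pgf {Ω : Type*} [MeasurableSpace Ω] (μ : Measure Ω) [IsProbabilityMeasure μ]
    (α z : ℝ) (hα0 : 0 < α) (hα1 : α < 1) (hz : |z| ≤ 1) (hz1 : (1 - α) * z ≠ 1)
    (Xv dv : Ω → ℕ) (hXm : Measurable Xv) (hdm : Measurable dv)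
    (hind : IndepFun Xv dv μ)
    (hdd : ∀ x, μ {ω | dv ω = x} = ENNReal.ofReal (α * (1 - α) ^ x)) :
    ∫ ω, z ^ min (Xv ω) (dv ω) ∂μ =
      (α + (1 - α) * (1 - z) * ∫ ω, ((1 - α) * z) ^ Xv ω ∂μ) / (1 - (1 - α) * z) := by
  have ha0 : (0:ℝ) ≤ 1 - α := by linarith
  have ha1 : (1:ℝ) - α < 1 := by linarith
  have hr : |(1 - α) * z| ≤ 1 := by
    rw [abs_mul, abs_of_nonneg ha0]
    calc (1 - α) * |z| ≤ 1 * 1 :=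
      mul_le_mul (by linarith) hz (abs_nonneg z) zero_le_one
    _ = 1 := one_mul 1
  set PX : ℕ → ℝ := fun x => (μ {ω | Xv ω = x}).toReal with hPX
  have hPXs : Summable PX := (aux_mass μ Xv hXm).summable
  have hPXnn : ∀ x, 0 ≤ PX x := fun x => ENNReal.toReal_nonneg
  have hpair : Measurable (fun ω => (Xv ω, dv ω)) := hXm.prodMk hdm
  have h1 : ∫ ω, z ^ min (Xv ω) (dv ω) ∂μ
      = ∑' p : ℕ × ℕ, (μ {ω | (Xv ω, dv ω) = p}).toReal * z ^ min p.1 p.2 :=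
    aux_expect μ (fun ω => (Xv ω, dv ω)) hpair (fun p => z ^ min p.1 p.2)
      (fun p => pow_abs_le_one hz _)
  have hfac : ∀ p : ℕ × ℕ, μ {ω | (Xv ω, dv ω) = p}
      = μ {ω | Xv ω = p.1} * μ {ω | dv ω = p.2} := by
    rintro ⟨x, d⟩
    have hset : {ω | (Xv ω, dv ω) = (x, d)} = Xv ⁻¹' {x} ∩ dv ⁻¹' {d} := by
      ext ω; simp [Prod.ext_iff]
    rw [hset, hind.measure_inter_preimage_eq_mul _ _ (measurableSet_singleton x)
      (measurableSet_singleton d)]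
    rfl
  have h2 : ∀ p : ℕ × ℕ, (μ {ω | (Xv ω, dv ω) = p}).toReal * z ^ min p.1 p.2
      = PX p.1 * (α * (1 - α) ^ p.2 * z ^ min p.1 p.2) := by
    intro p
    rw [hfac p, ENNReal.toReal_mul, hdd p.2, ENNReal.toReal_ofReal (by positivity)]
    ring
  rw [h1, tsum_congr h2]
  have hgs : Summable (fun d : ℕ => α * (1 - α) ^ d) :=
    (summable_geometric_of_lt_one ha0 ha1).mul_left α
  have hgnn : ∀ d : ℕ, 0 ≤ α * (1 - α) ^ d := fun d => by positivity
  have hF : Summable (fun p : ℕ × ℕ => PX p.1 * (α * (1 - α) ^ p.2 * z ^ min p.1 p.2)) := by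
    apply Summable.of_abs
    refine Summable.of_nonneg_of_le (fun p => abs_nonneg _) (fun p => ?_)
      (hPXs.mul_of_nonneg hgs hPXnn hgnn)
    rw [abs_mul, abs_mul, abs_of_nonneg (hPXnn _), abs_of_nonneg (hgnn _)]
    have h1' : |z ^ min p.1 p.2| ≤ 1 := pow_abs_le_one hz _
    calc PX p.1 * (α * (1 - α) ^ p.2 * |z ^ min p.1 p.2|)
        ≤ PX p.1 * (α * (1 - α) ^ p.2 * 1) := by
          apply mul_le_mul_of_nonneg_left _ (hPXnn _)
          exact mul_le_mul_of_nonneg_left h1' (hgnn _)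
      _ = PX p.1 * (α * (1 - α) ^ p.2) := by ring
  rw [Summable.tsum_prod' hF (fun x => hF.prod_factor x)]
  have h3 : ∀ x : ℕ, ∑' d : ℕ, PX x * (α * (1 - α) ^ d * z ^ min x d)
      = (α / (1 - (1 - α) * z)) * PX x
        + ((1 - α) * (1 - z) / (1 - (1 - α) * z)) * (PX x * ((1 - α) * z) ^ x) := by
    intro x
    rw [tsum_mul_left, geom_min α z hα0 hα1 hz hz1 x]
    ring
  rw [tsum_congr h3]
  have hPXr : Summable (fun x => PX x * ((1 - α) * z) ^ x) := by
    apply Summable.of_abs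
    refine Summable.of_nonneg_of_le (fun x => abs_nonneg _) (fun x => ?_) hPXs
    rw [abs_mul, abs_of_nonneg (hPXnn _)]
    have := pow_abs_le_one hr x
    calc PX x * |((1 - α) * z) ^ x| ≤ PX x * 1 :=
      mul_le_mul_of_nonneg_left this (hPXnn _)
    _ = PX x := mul_one _
  rw [Summable.tsum_add (hPXs.mul_left _) (hPXr.mul_left _), tsum_mul_left, tsum_mul_left,
    (aux_mass μ Xv hXm).tsum_eq,
    aux_expect μ Xv hXm (fun x => ((1 - α) * z) ^ x) (fun x => pow_abs_le_one hr x)]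
  have h1r : 1 - (1 - α) * z ≠ 0 := fun h => hz1 (by linarith)
  field_simp
  rfl

def idxSet (n : ℕ) : Finset (Option (ℕ ⊕ ℕ)) :=
  insert none (((Finset.range (n + 1)).image fun i => some (Sum.inl i)) ∪
    ((Finset.range (n + 1)).image fun i => some (Sum.inr i)))

lemma mem_idxSet {n : ℕ} {x : Option (ℕ ⊕ ℕ)} :
    x ∈ idxSet n ↔ x = none ∨ (∃ i ≤ n, x = some (Sum.inl i)) ∨ ∃ i ≤ n, x = some (Sum.inr i) := by
  simp [idxSet, Nat.lt_succ_iff, eq_comm]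

lemma idxSet_mono {n : ℕ} : idxSet n ⊆ idxSet (n + 1) := by
  intro x hx
  rw [mem_idxSet] at hx ⊢
  rcases hx with h | ⟨i, hi, h⟩ | ⟨i, hi, h⟩
  · exact Or.inl h
  · exact Or.inr (Or.inl ⟨i, by omega, h⟩)
  · exact Or.inr (Or.inr ⟨i, by omega, h⟩)

section Indep

variable {Ω : Type*} [MeasurableSpace Ω] {μ : Measure Ω}
  (δ β X : ℕ → Ω → ℕ)

/-- X n factors measurably through the coordinates in `idxSet n`. -/
lemma X_factor (hmX0 : Measurable (X 0))
    (hXrec : ∀ n ω, X (n + 1) ω = min (X n ω) (δ (n + 1) ω) + β (n + 1) ω) (n : ℕ) :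
    ∃ G : ({x // x ∈ idxSet n} → ℕ) → ℕ, Measurable G ∧
      ∀ ω, X n ω = G (fun i => Option.elim i.1 (X 0) (Sum.elim δ β) ω) := by
  induction n with
  | zero =>
    exact ⟨fun v => v ⟨none, Finset.mem_insert_self _ _⟩, measurable_pi_apply _, fun ω => rfl⟩
  | succ n ih =>
    obtain ⟨G, hGm, hGX⟩ := ih
    have hi1 : some (Sum.inl (n + 1)) ∈ idxSet (n + 1) :=
      mem_idxSet.2 (Or.inr (Or.inl ⟨n + 1, le_rfl, rfl⟩))
    have hi2 : some (Sum.inr (n + 1)) ∈ idxSet (n + 1) :=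
      mem_idxSet.2 (Or.inr (Or.inr ⟨n + 1, le_rfl, rfl⟩))
    refine ⟨fun v => min (G fun i => v ⟨i.1, idxSet_mono i.2⟩) (v ⟨some (Sum.inl (n + 1)), hi1⟩)
        + v ⟨some (Sum.inr (n + 1)), hi2⟩, ?_, ?_⟩
    · have hres : Measurable (fun (v : {x // x ∈ idxSet (n + 1)} → ℕ)
          (i : {x // x ∈ idxSet n}) => v ⟨i.1, idxSet_mono i.2⟩) :=
        measurable_pi_lambda _ fun i => measurable_pi_apply _
      have hmin : Measurable (fun q : ℕ × ℕ × ℕ => min q.1 q.2.1 + q.2.2) :=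
        measurable_of_countable _
      exact hmin.comp ((hGm.comp hres).prodMk
        ((measurable_pi_apply _).prodMk (measurable_pi_apply _)))
    · intro ω
      rw [hXrec n ω, hGX ω]
      rfl

lemma indep_struct (hmδ : ∀ n, Measurable (δ n)) (hmβ : ∀ n, Measurable (β n))
    (hmX0 : Measurable (X 0))
    (hXrec : ∀ n ω, X (n + 1) ω = min (X n ω) (δ (n + 1) ω) + β (n + 1) ω)
    (hindep : iIndepFun
      (fun i : Option (ℕ ⊕ ℕ) => Option.elim i (X 0) (Sum.elim δ β)) μ) (n : ℕ) :
    IndepFun (fun ω => (X n ω, δ (n + 1) ω)) (β (n + 1)) μ ∧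
      IndepFun (X n) (δ (n + 1)) μ := by
  classical
  set F : Option (ℕ ⊕ ℕ) → Ω → ℕ := fun i => Option.elim i (X 0) (Sum.elim δ β) with hF
  have hFm : ∀ i, Measurable (F i) := by
    rintro (_ | (i | i))
    · exact hmX0
    · exact hmδ i
    · exact hmβ i
  obtain ⟨G, hGm, hGX⟩ := X_factor δ β X hmX0 hXrec n
  have hnotl : some (Sum.inl (n + 1)) ∉ idxSet n := by
    rw [mem_idxSet]
    rintro (h | ⟨i, hi, h⟩ | ⟨i, hi, h⟩) <;> simp_all <;> omega
  have hnotr : some (Sum.inr (n + 1)) ∉ idxSet n := by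
    rw [mem_idxSet]
    rintro (h | ⟨i, hi, h⟩ | ⟨i, hi, h⟩) <;> simp_all <;> omega
  constructor
  · -- pair with β
    set S' : Finset (Option (ℕ ⊕ ℕ)) := insert (some (Sum.inl (n + 1))) (idxSet n) with hS'
    have hd : Disjoint S' ({some (Sum.inr (n + 1))} : Finset (Option (ℕ ⊕ ℕ))) := by
      rw [Finset.disjoint_singleton_right, hS', Finset.mem_insert]
      rintro (h | h)
      · exact (by simp at h : False)
      · exact hnotr h
    have base := hindep.indepFun_finset S' {some (Sum.inr (n + 1))} hd hFm
    have hsub : idxSet n ⊆ S' := Finset.subset_insert _ _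
    have hφm : Measurable (fun (v : {x // x ∈ S'} → ℕ) =>
        (G (fun i : {x // x ∈ idxSet n} => v ⟨i.1, hsub i.2⟩),
          v ⟨some (Sum.inl (n + 1)), Finset.mem_insert_self _ _⟩)) := by
      refine Measurable.prodMk ?_ (measurable_pi_apply _)
      exact hGm.comp (measurable_pi_lambda _ fun i => measurable_pi_apply _)
    have hψm : Measurable (fun (v : {x // x ∈ ({some (Sum.inr (n + 1))} : Finset (Option (ℕ ⊕ ℕ)))} → ℕ) =>
        v ⟨some (Sum.inr (n + 1)), Finset.mem_singleton_self _⟩) := measurable_pi_apply _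
    have h' := base.comp hφm hψm
    refine h'.congr (Filter.Eventually.of_forall fun ω => ?_)
      (Filter.Eventually.of_forall fun ω => rfl)
    simp only [Function.comp]
    rw [← hGX ω]
    rfl
  · -- X n indep δ (n+1)
    have hd : Disjoint (idxSet n) ({some (Sum.inl (n + 1))} : Finset (Option (ℕ ⊕ ℕ))) :=
      Finset.disjoint_singleton_right.2 hnotl
    have base := hindep.indepFun_finset (idxSet n) {some (Sum.inl (n + 1))} hd hFm
    have hψm : Measurable (fun (v : {x // x ∈ ({some (Sum.inl (n + 1))} : Finset (Option (ℕ ⊕ ℕ)))} → ℕ) =>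
        v ⟨some (Sum.inl (n + 1)), Finset.mem_singleton_self _⟩) := measurable_pi_apply _
    have h' := base.comp hGm hψm
    exact h'.congr (Filter.Eventually.of_forall fun ω => (hGX ω).symm)
      (Filter.Eventually.of_forall fun ω => rfl)

end Indep

/-- Dual chain `X_{n+1} = X_n ∧ δ_{n+1} + β_{n+1}` with `δ` shifted geometric(α):
the p.g.f.'s satisfy `Φ_{n+1}(z) = φ_β(z)(α + ᾱ(1-z)Φ_n(ᾱz))/(1-ᾱz)`; in
particular `P(X_n = 0) = b₀α(1-(b₀ᾱ)ⁿ)/(1-b₀ᾱ) + (b₀ᾱ)ⁿ P(X_0 = 0)`, which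
converges to `b₀α/(1-b₀ᾱ)`. -/
theorem stmt16 {Ω : Type*} [MeasurableSpace Ω] (μ : Measure Ω) [IsProbabilityMeasure μ]
    (α : ℝ) (hα0 : 0 < α) (hα1 : α < 1)
    (b : ℕ → ℝ) (hbnn : ∀ n, 0 ≤ b n) (hbsum : HasSum b 1)
    (hb00 : 0 < b 0) (hb01 : b 0 < 1)
    (δ β : ℕ → Ω → ℕ) (X : ℕ → Ω → ℕ)
    (hmδ : ∀ n, Measurable (δ n)) (hmβ : ∀ n, Measurable (β n)) (hmX : ∀ n, Measurable (X n))
    (hXrec : ∀ n ω, X (n + 1) ω = min (X n ω) (δ (n + 1) ω) + β (n + 1) ω)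
    (hδd : ∀ n x, μ {ω | δ n ω = x} = ENNReal.ofReal (α * (1 - α) ^ x))
    (hβd : ∀ n x, μ {ω | β n ω = x} = ENNReal.ofReal (b x))
    (hindep : iIndepFun
      (fun i : Option (ℕ ⊕ ℕ) => Option.elim i (X 0) (Sum.elim δ β)) μ) :
    (∀ (n : ℕ) (z : ℝ), |z| ≤ 1 → (1 - α) * z ≠ 1 →
      ∫ ω, z ^ X (n + 1) ω ∂μ =
        (∑' k : ℕ, b k * z ^ k) *
          (α + (1 - α) * (1 - z) * ∫ ω, ((1 - α) * z) ^ X n ω ∂μ) / (1 - (1 - α) * z)) ∧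
    (∀ n : ℕ, (μ {ω | X n ω = 0}).toReal =
      b 0 * α * (1 - (b 0 * (1 - α)) ^ n) / (1 - b 0 * (1 - α)) +
        (b 0 * (1 - α)) ^ n * (μ {ω | X 0 ω = 0}).toReal) ∧
    Tendsto (fun n : ℕ => (μ {ω | X n ω = 0}).toReal) atTop
      (nhds (b 0 * α / (1 - b 0 * (1 - α)))) := by
  have hmain : ∀ (n : ℕ) (z : ℝ), |z| ≤ 1 → (1 - α) * z ≠ 1 →
      ∫ ω, z ^ X (n + 1) ω ∂μ =
        (∑' k : ℕ, b k * z ^ k) *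
          (α + (1 - α) * (1 - z) * ∫ ω, ((1 - α) * z) ^ X n ω ∂μ) / (1 - (1 - α) * z) := by
    intro n z hz hz1
    obtain ⟨hpair, hXδ⟩ := indep_struct δ β X hmδ hmβ (hmX 0) hXrec hindep n
    have hminm : Measurable (fun ω => min (X n ω) (δ (n + 1) ω)) :=
      (measurable_of_countable (fun p : ℕ × ℕ => min p.1 p.2)).comp
        ((hmX n).prodMk (hmδ (n + 1)))
    have int1 : Integrable (fun ω => z ^ min (X n ω) (δ (n + 1) ω)) μ :=
      aux_integrable μ _ hminm (fun k => z ^ k) (pow_abs_le_one hz)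
    have int2 : Integrable (fun ω => z ^ β (n + 1) ω) μ :=
      aux_integrable μ _ (hmβ (n + 1)) (fun k => z ^ k) (pow_abs_le_one hz)
    have hfg : IndepFun (fun ω => z ^ min (X n ω) (δ (n + 1) ω))
        (fun ω => z ^ β (n + 1) ω) μ :=
      hpair.comp (measurable_of_countable (fun p : ℕ × ℕ => z ^ min p.1 p.2))
        (measurable_of_countable (fun k : ℕ => z ^ k))
    have hβint : ∫ ω, z ^ β (n + 1) ω ∂μ = ∑' k : ℕ, b k * z ^ k := by
      rw [aux_expect μ (β (n + 1)) (hmβ (n + 1)) (fun k => z ^ k) (pow_abs_le_one hz)]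
      exact tsum_congr fun k => by rw [hβd (n + 1) k, ENNReal.toReal_ofReal (hbnn k)]
    have hminint := min_pgf μ α z hα0 hα1 hz hz1 (X n) (δ (n + 1)) (hmX n) (hmδ (n + 1))
      hXδ (hδd (n + 1))
    calc ∫ ω, z ^ X (n + 1) ω ∂μ
        = ∫ ω, ((fun ω => z ^ min (X n ω) (δ (n + 1) ω)) * fun ω => z ^ β (n + 1) ω) ω ∂μ :=
          integral_congr_ae (Filter.Eventually.of_forall fun ω => by
            simp [Pi.mul_apply, hXrec n ω, pow_add])
      _ = (∫ ω, z ^ min (X n ω) (δ (n + 1) ω) ∂μ) * ∫ ω, z ^ β (n + 1) ω ∂μ :=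
          hfg.integral_mul_eq_mul_integral int1.1 int2.1
      _ = (∑' k : ℕ, b k * z ^ k) *
          (α + (1 - α) * (1 - z) * ∫ ω, ((1 - α) * z) ^ X n ω ∂μ) / (1 - (1 - α) * z) := by
          rw [hβint, hminint]; ring
  have key : ∀ (Y : Ω → ℕ), Measurable Y →
      ∫ ω, (0 : ℝ) ^ Y ω ∂μ = (μ {ω | Y ω = 0}).toReal := by
    intro Y hY
    rw [aux_expect μ Y hY (fun k => (0 : ℝ) ^ k)
      (fun k => by rcases k with _ | k <;> simp)]
    rw [tsum_eq_single 0 ?_]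
    · simp
    · intro k hk
      rcases k with _ | k
      · exact absurd rfl hk
      · simp
  have hb0sum : (∑' k : ℕ, b k * (0 : ℝ) ^ k) = b 0 := by
    rw [tsum_eq_single 0 ?_]
    · simp
    · intro k hk
      rcases k with _ | k
      · exact absurd rfl hk
      · simp
  have hzrec : ∀ n : ℕ, (μ {ω | X (n + 1) ω = 0}).toReal
      = b 0 * (α + (1 - α) * (μ {ω | X n ω = 0}).toReal) := by
    intro n
    have h0 := hmain n 0 (by simp) (by simp)
    rw [show ((1 : ℝ) - α) * 0 = 0 from mul_zero _] at h0
    rw [key _ (hmX (n + 1)), key _ (hmX n)] at h0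
    rw [h0, hb0sum]
    norm_num
  have hne : 1 - b 0 * (1 - α) ≠ 0 := by nlinarith
  have hform : ∀ n : ℕ, (μ {ω | X n ω = 0}).toReal =
      b 0 * α * (1 - (b 0 * (1 - α)) ^ n) / (1 - b 0 * (1 - α)) +
        (b 0 * (1 - α)) ^ n * (μ {ω | X 0 ω = 0}).toReal := by
    intro n
    induction n with
    | zero => simp
    | succ n ih =>
      rw [hzrec n, ih]
      field_simp
      ring
  refine ⟨hmain, hform, ?_⟩
  have hr0 : (0 : ℝ) ≤ b 0 * (1 - α) := mul_nonneg hb00.le (by linarith)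
  have hr1 : b 0 * (1 - α) < 1 := by nlinarith
  have hrt : Tendsto (fun n : ℕ => (b 0 * (1 - α)) ^ n) atTop (nhds 0) :=
    tendsto_pow_atTop_nhds_zero_of_lt_one hr0 hr1
  have hfun : (fun n : ℕ => (μ {ω | X n ω = 0}).toReal)
      = fun n : ℕ => b 0 * α * (1 - (b 0 * (1 - α)) ^ n) / (1 - b 0 * (1 - α)) +
        (b 0 * (1 - α)) ^ n * (μ {ω | X 0 ω = 0}).toReal := funext hform
  rw [hfun]
  have h : Tendsto (fun n : ℕ => b 0 * α * (1 - (b 0 * (1 - α)) ^ n) / (1 - b 0 * (1 - α)) +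
      (b 0 * (1 - α)) ^ n * (μ {ω | X 0 ω = 0}).toReal) atTop
      (nhds (b 0 * α * (1 - 0) / (1 - b 0 * (1 - α)) + 0 * (μ {ω | X 0 ω = 0}).toReal)) :=
    (((tendsto_const_nhds.sub hrt).const_mul (b 0 * α)).div_const _).add (hrt.mul_const _)
  simpa using h
end

section
/- If φ_β(z) = b₀ + (1-b₀)·αz/(1 - ᾱz) with b₀ = 1/(1+ᾱ) (a zero-inflated geometric input), then Φ_∞(z) = α/(1 - ᾱz) solves the stationary equation Φ_∞(z) = φ_β(z)·(α + ᾱ(1-z)Φ_∞(ᾱz))/(1 - ᾱz) of the dual chain X_{n+1} = X_n ∧ δ_{n+1} + β_{n+1}; i.e., the stationary law is geometric with failure parameter α and mean ᾱ/α. -/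
open Set

/-- For the dual chain, if `φ_β(z) = b₀ + (1-b₀)αz/(1-ᾱz)` with `b₀ = 1/(1+ᾱ)`
(zero-inflated geometric input), then `Φ_∞(z) = α/(1-ᾱz)` solves the stationary
functional equation `Φ_∞(z) = φ_β(z)(α + ᾱ(1-z)Φ_∞(ᾱz))/(1-ᾱz)`; i.e. the
stationary law is geometric with failure parameter `α` and mean `ᾱ/α`. -/
theorem stmt19 (α b₀ : ℝ) (hα0 : 0 < α) (hα1 : α < 1)
    (hb₀ : b₀ = 1 / (1 + (1 - α)))
    (φβ Φ : ℝ → ℝ)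
    (hφβ : ∀ z, φβ z = b₀ + (1 - b₀) * (α * z / (1 - (1 - α) * z)))
    (hΦ : ∀ z, Φ z = α / (1 - (1 - α) * z)) :
    (∀ z : ℝ, (1 - α) * z ≠ 1 → (1 - α) ^ 2 * z ≠ 1 →
      Φ z = φβ z * (α + (1 - α) * (1 - z) * Φ ((1 - α) * z)) / (1 - (1 - α) * z)) ∧
    (∀ z ∈ Icc (0 : ℝ) 1, HasSum (fun n : ℕ => α * (1 - α) ^ n * z ^ n) (Φ z)) ∧
    HasSum (fun n : ℕ => (n : ℝ) * (α * (1 - α) ^ n)) ((1 - α) / α) := by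
  have hαne : α ≠ 0 := ne_of_gt hα0
  refine ⟨?_, ?_, ?_⟩
  · intro z h1 h2
    have h1' : 1 - (1 - α) * z ≠ 0 := fun h => h1 (by linarith)
    have h2' : 1 - (1 - α) * ((1 - α) * z) ≠ 0 := fun h => h2 (by ring_nf at h ⊢; linarith)
    have h3 : 1 + (1 - α) ≠ 0 := by linarith
    rw [hΦ, hΦ, hφβ, hb₀]
    field_simp
    ring
  · intro z hz
    obtain ⟨hz0, hz1⟩ := hz
    have hr : |(1 - α) * z| < 1 := by
      rw [abs_of_nonneg (by nlinarith)]
      nlinarith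
    have := hasSum_geometric_of_abs_lt_one hr
    have h := this.mul_left α
    rw [hΦ]
    rw [div_eq_mul_inv]
    convert h using 2 with n
    · rfl
    rw [mul_pow]; ring
  · have hr : |(1 - α)| < 1 := by rw [abs_of_nonneg (by linarith)]; linarith
    have h := (hasSum_coe_mul_geometric_of_norm_lt_one (r := 1 - α)
      (by rwa [Real.norm_eq_abs])).mul_left α
    have : α * ((1 - α) / (1 - (1 - α)) ^ 2) = (1 - α) / α := by
      rw [show 1 - (1 - α) = α by ring]; field_simp
    rw [this] at h
    convert h using 2 with n
    · rfl
    ring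
end
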